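/- Let A be a positive semidefinite n×n complex matrix, and B a Hermitian n×n matrix with −A ≤ B ≤ A. Then det|B| ≤ det A, where |B| = (B*B)^{1/2}. -/

import Mathlib

open ComplexOrder

private lemma eig_le_one {n : ℕ} {M : Matrix (Fin n) (Fin n) ℂ} (hM : M.IsHermitian)
    (h : ((1 : Matrix (Fin n) (Fin n) ℂ) - M).PosSemidef) (i : Fin n) :
    hM.eigenvalues i ≤ 1 := by
  have hv := h.re_dotProduct_nonneg (⇑(hM.eigenvectorBasis i))
  rw [Matrix.sub_mulVec, Matrix.one_mulVec, dotProduct_sub, map_sub] at hv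
  have hnorm : RCLike.re (dotProduct (star ⇑(hM.eigenvectorBasis i))
      ⇑(hM.eigenvectorBasis i)) = 1 := by
    have h1 : (inner ℂ (hM.eigenvectorBasis i) (hM.eigenvectorBasis i) : ℂ)
        = dotProduct (star ⇑(hM.eigenvectorBasis i)) ⇑(hM.eigenvectorBasis i) :=
      (EuclideanSpace.inner_eq_star_dotProduct _ _).trans (dotProduct_comm _ _)
    rw [← h1, inner_self_eq_norm_sq_to_K, hM.eigenvectorBasis.orthonormal.1 i]
    norm_num
  rw [hnorm] at hv
  rw [hM.eigenvalues_eq]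
  linarith

private lemma neg_one_le_eig {n : ℕ} {M : Matrix (Fin n) (Fin n) ℂ} (hM : M.IsHermitian)
    (h : ((1 : Matrix (Fin n) (Fin n) ℂ) + M).PosSemidef) (i : Fin n) :
    -1 ≤ hM.eigenvalues i := by
  have hv := h.re_dotProduct_nonneg (⇑(hM.eigenvectorBasis i))
  rw [Matrix.add_mulVec, Matrix.one_mulVec, dotProduct_add, map_add] at hv
  have hnorm : RCLike.re (dotProduct (star ⇑(hM.eigenvectorBasis i))
      ⇑(hM.eigenvectorBasis i)) = 1 := by
    have h1 : (inner ℂ (hM.eigenvectorBasis i) (hM.eigenvectorBasis i) : ℂ)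
        = dotProduct (star ⇑(hM.eigenvectorBasis i)) ⇑(hM.eigenvectorBasis i) :=
      (EuclideanSpace.inner_eq_star_dotProduct _ _).trans (dotProduct_comm _ _)
    rw [← h1, inner_self_eq_norm_sq_to_K, hM.eigenvectorBasis.orthonormal.1 i]
    norm_num
  rw [hnorm] at hv
  rw [hM.eigenvalues_eq]
  linarith

/-- Core case: A positive definite. -/
private lemma core {n : ℕ} (A B : Matrix (Fin n) (Fin n) ℂ)
    (hA : A.PosDef) (hB : B.IsHermitian)
    (h1 : (A - B).PosSemidef) (h2 : (A + B).PosSemidef) :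
    ‖B.det‖ ≤ A.det.re := by
  classical
  obtain ⟨C, hC, hCC⟩ : ∃ C : Matrix (Fin n) (Fin n) ℂ, C.PosSemidef ∧ C * C = A :=
    open scoped MatrixOrder in
    ⟨CFC.sqrt A, Matrix.nonneg_iff_posSemidef.mp (CFC.sqrt_nonneg A), CFC.sqrt_mul_sqrt_self A hA.posSemidef.nonneg⟩
  have hdetA : 0 < A.det := hA.det_pos
  have hdetA_ne : A.det ≠ 0 := hdetA.ne'
  have hdetC_ne : C.det ≠ 0 := by
    intro h
    apply hdetA_ne
    rw [← hCC, Matrix.det_mul, h, mul_zero]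
  have hCinv : C⁻¹.IsHermitian := hC.1.inv
  have hCinvC : C⁻¹ * C = 1 := Matrix.nonsing_inv_mul C (isUnit_iff_ne_zero.mpr hdetC_ne)
  have hCCinv : C * C⁻¹ = 1 := Matrix.mul_nonsing_inv C (isUnit_iff_ne_zero.mpr hdetC_ne)
  set M := C⁻¹ * B * C⁻¹ with hMdef
  have hM : M.IsHermitian := by
    unfold M
    unfold Matrix.IsHermitian
    rw [Matrix.conjTranspose_mul, Matrix.conjTranspose_mul, hCinv.eq, hB.eq,
      ← Matrix.mul_assoc]
  have key : ∀ X : Matrix (Fin n) (Fin n) ℂ, C⁻¹ * (A + X) * C⁻¹ = 1 + C⁻¹ * X * C⁻¹ := by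
    intro X
    rw [Matrix.mul_add, Matrix.add_mul]
    congr 1
    rw [← hCC, ← Matrix.mul_assoc, hCinvC, Matrix.one_mul, hCCinv]
  have h1M : ((1 : Matrix (Fin n) (Fin n) ℂ) - M).PosSemidef := by
    have := h1.mul_mul_conjTranspose_same C⁻¹
    rw [hCinv.eq] at this
    have heq : C⁻¹ * (A - B) * C⁻¹ = 1 - M := by
      rw [sub_eq_add_neg, key, hMdef, Matrix.mul_neg, Matrix.neg_mul]
      abel
    rwa [heq] at this
  have h2M : ((1 : Matrix (Fin n) (Fin n) ℂ) + M).PosSemidef := by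
    have := h2.mul_mul_conjTranspose_same C⁻¹
    rw [hCinv.eq] at this
    rwa [key] at this
  -- |det M| ≤ 1
  have hdetM : ‖M.det‖ ≤ 1 := by
    rw [hM.det_eq_prod_eigenvalues]
    rw [norm_prod]
    refine Finset.prod_le_one (fun i _ => norm_nonneg _) (fun i _ => ?_)
    have habs := abs_le.mpr ⟨neg_one_le_eig hM h2M i, eig_le_one hM h1M i⟩
    simpa using habs
  -- det B = det A * det M
  have hdetB : B.det = A.det * M.det := by
    have : M.det = C⁻¹.det * B.det * C⁻¹.det := by
      unfold M
      rw [Matrix.det_mul, Matrix.det_mul]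
    rw [this, Matrix.det_nonsing_inv, ← hCC, Matrix.det_mul]
    have hCd : C.det ≠ 0 := hdetC_ne
    simp only [Ring.inverse_eq_inv']
    field_simp
  have hdetA_re : ‖A.det‖ = A.det.re := by
    obtain ⟨hre, him⟩ := Complex.lt_def.mp hdetA
    simp only [Complex.zero_re, Complex.zero_im] at hre him
    rw [Complex.norm_def, Complex.normSq_apply, ← him]
    simp only [mul_zero, add_zero]
    exact Real.sqrt_mul_self hre.le
  calc ‖B.det‖ = ‖A.det‖ * ‖M.det‖ := by
        rw [hdetB, norm_mul]
    _ ≤ ‖A.det‖ * 1 := by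
        exact mul_le_mul_of_nonneg_left hdetM (norm_nonneg _)
    _ = A.det.re := by rw [mul_one, hdetA_re]

theorem stmt_4 {n : ℕ} (A B : Matrix (Fin n) (Fin n) ℂ)
    (hA : A.PosSemidef) (hB : B.IsHermitian)
    (h1 : (A - B).PosSemidef) (h2 : (A + B).PosSemidef) :
    ‖B.det‖ ≤ A.det.re := by
  classical
  -- Perturb: A + ε • 1 for ε > 0
  have hstep : ∀ ε : ℝ, 0 < ε →
      ‖B.det‖ ≤ ((A + (ε : ℂ) • 1).det).re := by
    intro ε hε
    have hone : ((ε : ℂ) • (1 : Matrix (Fin n) (Fin n) ℂ)).PosDef := by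
      refine Matrix.PosDef.of_dotProduct_mulVec_pos ?_ ?_
      · unfold Matrix.IsHermitian
        rw [Matrix.conjTranspose_smul, Matrix.conjTranspose_one]
        congr 1
        simp [Complex.ext_iff]
      · intro x hx
        rw [Matrix.smul_mulVec, Matrix.one_mulVec, dotProduct_smul,
          smul_eq_mul]
        have hpos : 0 < dotProduct (star x) x :=
          Matrix.dotProduct_star_self_pos_iff.mpr hx
        exact mul_pos (Complex.zero_lt_real.mpr hε) hpos
    have hAε : (A + (ε : ℂ) • 1).PosDef := by
      refine Matrix.PosDef.of_dotProduct_mulVec_pos (hA.1.add hone.1) (fun x hx => ?_)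
      rw [Matrix.add_mulVec, dotProduct_add]
      exact add_pos_of_nonneg_of_pos (hA.dotProduct_mulVec_nonneg x) (hone.dotProduct_mulVec_pos hx)
    have h1' : ((A + (ε : ℂ) • 1) - B).PosSemidef := by
      have : (A + (ε : ℂ) • 1) - B = (A - B) + (ε : ℂ) • 1 := by abel
      rw [this]
      exact h1.add hone.posSemidef
    have h2' : ((A + (ε : ℂ) • 1) + B).PosSemidef := by
      have : (A + (ε : ℂ) • 1) + B = (A + B) + (ε : ℂ) • 1 := by abel
      rw [this]
      exact h2.add hone.posSemidef
    exact core _ B hAε hB h1' h2'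
  -- take the limit ε → 0⁺
  have hcont : Filter.Tendsto (fun ε : ℝ => ((A + (ε : ℂ) • 1).det).re)
      (nhdsWithin 0 (Set.Ioi 0)) (nhds (A.det.re)) := by
    have : Continuous (fun ε : ℝ => ((A + (ε : ℂ) • 1).det).re) := by
      apply Complex.continuous_re.comp
      apply Continuous.matrix_det
      exact continuous_const.add ((Complex.continuous_ofReal.smul continuous_const))
    have h0 : ((A + ((0:ℝ) : ℂ) • 1).det).re = A.det.re := by norm_num
    rw [← h0]
    exact (this.tendsto 0).mono_left nhdsWithin_le_nhds
  exact ge_of_tendsto hcont (Filter.eventually_of_mem self_mem_nhdsWithin (fun ε hε => hstep ε hε))
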